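/- arXiv:2506.16920 — 2 statements merged into one kernel-verified Lean document; each statement's English description precedes it below -/
import Mathlib

section
/- Suppose the n-ary brackets on L (n = 0,1,2,…) are multilinear, antisymmetric in the supersense, of parity n mod 2, and satisfy the higher Jacobi identities: for every n ≥ 0 and all homogeneous x₁,…,xₙ ∈ L, Σ_{r+s=n} Σ_{(r,s)-shuffles σ} (−1)^{rs}·sgn(σ)·(−1)^{α(σ;x)} [[x_{σ(1)},…,x_{σ(r)}], x_{σ(r+1)},…,x_{σ(n)}] = 0. Then the induced brackets on ΠL, defined by Π[x₁,…,xₙ] = (−1)^{x̃₁(n−1)+x̃₂(n−2)+⋯+x̃_{n−1}} [Πx₁,…,Πxₙ], satisfy the odd higher Jacobi identities: for every n ≥ 0 and all homogeneous u₁,…,uₙ ∈ ΠL, Σ_{r+s=n} Σ_{(r,s)-shuffles σ} (−1)^{α(σ;u)} [[u_{σ(1)},…,u_{σ(r)}], u_{σ(r+1)},…,u_{σ(n)}] = 0. -/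
/-!
STATEMENT 1. A Z/2-graded R-module L = L₀ ⊕ L₁ is presented as the product
`L0 × L1` (first factor = even part, second factor = odd part); its parity
reversion ΠL is `L1 × L0`, and Π : L → ΠL is `LinearEquiv.prodComm`.
If the n-ary brackets on L are multilinear, antisymmetric in the supersense,
of parity n mod 2, and satisfy the higher Jacobi identities
  Σ_{r+s=n} Σ_{(r,s)-shuffles σ} (−1)^{rs}·sgn(σ)·(−1)^{α(σ;x)}
      [[x_{σ(1)},…,x_{σ(r)}], x_{σ(r+1)},…,x_{σ(n)}] = 0,
then the induced brackets on ΠL, defined by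
  Π[x₁,…,xₙ] = (−1)^{x̃₁(n−1)+x̃₂(n−2)+⋯+x̃_{n−1}} [Πx₁,…,Πxₙ],
satisfy the odd higher Jacobi identities
  Σ_{r+s=n} Σ_{(r,s)-shuffles σ} (−1)^{α(σ;u)}
      [[u_{σ(1)},…,u_{σ(r)}], u_{σ(r+1)},…,u_{σ(n)}] = 0.
-/

/-- An element of `M × N` (viewed as even part × odd part of a Z/2-graded
module) is homogeneous of parity `p` if the complementary component vanishes. -/
def IsHomog {M N : Type*} [Zero M] [Zero N] (p : ZMod 2) (x : M × N) : Prop :=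
  if p = 0 then x.2 = 0 else x.1 = 0

/-- The Koszul sign of the passage from `(x₁,…,xₙ)` to `(x_{σ(1)},…,x_{σ(n)})`
for homogeneous arguments of parities `p i`. -/
def koszulSign {n : ℕ} (σ : Equiv.Perm (Fin n)) (p : Fin n → ZMod 2) : ℤ :=
  (-1) ^ ((∑ i : Fin n, ∑ j : Fin n,
    if i < j ∧ σ j < σ i then p (σ i) * p (σ j) else 0 : ZMod 2)).val

/-- The sign `(−1)^{x̃₁(n−1)+x̃₂(n−2)+⋯+x̃_{n−1}}` (0-based indexing:
slot `i` contributes `x̃ᵢ·(n−1−i)`). -/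
def shiftSign {n : ℕ} (p : Fin n → ZMod 2) : ℤ :=
  (-1) ^ ((∑ i : Fin n, p i * ((n : ZMod 2) - 1 - ((i : ℕ) : ZMod 2)) : ZMod 2)).val

/-- `σ` is an (r, n−r)-shuffle: it is increasing on the first `r` slots and on
the last `n − r` slots. -/
def IsShuffle {n : ℕ} (r : ℕ) (σ : Equiv.Perm (Fin n)) : Prop :=
  ∀ i j : Fin n, i < j → ((j : ℕ) < r ∨ r ≤ (i : ℕ)) → σ i < σ j

instance {n : ℕ} (r : ℕ) (σ : Equiv.Perm (Fin n)) : Decidable (IsShuffle r σ) := by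
  unfold IsShuffle; infer_instance

/-- The term `[[x_{σ(1)},…,x_{σ(r)}], x_{σ(r+1)},…,x_{σ(n)}]` of the higher
Jacobi identity. -/
def jacobiTerm {R : Type*} [CommRing R] {M : Type*} [AddCommGroup M] [Module R M]
    (b : ∀ n : ℕ, MultilinearMap R (fun _ : Fin n => M) M)
    {n : ℕ} (r : Fin (n + 1)) (σ : Equiv.Perm (Fin n)) (x : Fin n → M) : M :=
  b ((n - (r : ℕ)) + 1)
    (Fin.cons
      (b (r : ℕ) (fun i : Fin (r : ℕ) =>
        x (σ ⟨(i : ℕ), lt_of_lt_of_le i.isLt r.is_le⟩)))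
      (fun j : Fin (n - (r : ℕ)) =>
        x (σ ⟨(r : ℕ) + (j : ℕ), by omega⟩)))


open Finset Equiv

section AuxSigns

/-- integer sign attached to a `ZMod 2` element -/
def zsign (a : ZMod 2) : ℤ := (-1) ^ a.val

lemma zsign_natCast (k : ℕ) : zsign (k : ZMod 2) = (-1 : ℤ) ^ k := by
  rw [zsign, ZMod.val_natCast, ← neg_one_pow_eq_pow_mod_two]

lemma zsign_mul_self (a : ZMod 2) : zsign a * zsign a = 1 := by revert a; decide

lemma zsign_sum {ι : Type*} (s : Finset ι) (f : ι → ZMod 2) :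
    zsign (∑ i ∈ s, f i) = ∏ i ∈ s, zsign (f i) := by
  classical
  induction s using Finset.induction_on with
  | empty => simp [zsign]
  | insert _ _ h ih =>
    rw [Finset.sum_insert h, Finset.prod_insert h, ← ih]
    have : ∀ a b : ZMod 2, zsign (a + b) = zsign a * zsign b := by decide
    apply this

lemma koszulSign_eq_zsign {n : ℕ} (σ : Equiv.Perm (Fin n)) (p : Fin n → ZMod 2) :
    koszulSign σ p = zsign (∑ i : Fin n, ∑ j : Fin n,
      if i < j ∧ σ j < σ i then p (σ i) * p (σ j) else 0) := rfl

lemma shiftSign_eq_zsign {n : ℕ} (p : Fin n → ZMod 2) :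
    shiftSign p = zsign (∑ i : Fin n, p i * ((n : ZMod 2) - 1 - ((i : ℕ) : ZMod 2))) := rfl

/-- parity of the number of inversions -/
def invCount {n : ℕ} (σ : Equiv.Perm (Fin n)) : ZMod 2 :=
  ∑ i : Fin n, ∑ j : Fin n, if i < j ∧ σ j < σ i then 1 else 0

lemma sign_eq_signAux {n : ℕ} (σ : Equiv.Perm (Fin n)) :
    (Equiv.Perm.sign σ : ℤˣ) = Equiv.Perm.signAux σ := by
  have key : ∀ (s : Multiset (Fin n)) (hs : ∀ x, x ∈ s),
      Equiv.Perm.signAux3 σ hs = Equiv.Perm.signAux σ := by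
    intro s
    induction s using Quotient.inductionOn with
    | _ l =>
      intro hs
      show Equiv.Perm.signAux2 l σ = _
      rw [← Equiv.Perm.signAux_eq_signAux2 l σ (Equiv.refl _) (fun x _ => hs x)]
      congr 1
  exact key (Finset.univ : Finset (Fin n)).val (fun x => Finset.mem_univ x)

lemma sign_eq_zsign_invCount {n : ℕ} (σ : Equiv.Perm (Fin n)) :
    ((Equiv.Perm.sign σ : ℤˣ) : ℤ) = zsign (invCount σ) := by
  rw [sign_eq_signAux]
  have h1 : ((Equiv.Perm.signAux σ : ℤˣ) : ℤ)
      = ∏ x ∈ Equiv.Perm.finPairsLT n,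
          (if x.2 < x.1 ∧ σ x.1 ≤ σ x.2 then (-1 : ℤ) else 1) := by
    rw [Equiv.Perm.signAux, Units.coe_prod]
    refine Finset.prod_congr rfl fun x hx => ?_
    have hlt := Equiv.Perm.mem_finPairsLT.1 hx
    by_cases h : σ x.1 ≤ σ x.2 <;> simp [h, hlt]
  have h2 : (∏ x ∈ Equiv.Perm.finPairsLT n,
        (if x.2 < x.1 ∧ σ x.1 ≤ σ x.2 then (-1 : ℤ) else 1))
      = ∏ x ∈ (Finset.univ.sigma fun _ : Fin n => (Finset.univ : Finset (Fin n))),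
          (if x.2 < x.1 ∧ σ x.1 ≤ σ x.2 then (-1 : ℤ) else 1) :=
    Finset.prod_subset
      (fun x _ => Finset.mem_sigma.2 ⟨Finset.mem_univ _, Finset.mem_univ _⟩)
      (fun x _ hx => if_neg fun hc => hx (Equiv.Perm.mem_finPairsLT.2 hc.1))
  rw [h1, h2]
  refine (Finset.prod_sigma _ _ _).trans ?_
  have h3 : ∀ (i j : Fin n), (if j < i ∧ σ i ≤ σ j then (-1 : ℤ) else 1)
      = (-1 : ℤ) ^ (if j < i ∧ σ i ≤ σ j then 1 else 0 : ℕ) := by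
    intro i j; split <;> simp
  simp_rw [h3, Finset.prod_pow_eq_pow_sum]
  have h4 : (∑ i : Fin n, ∑ j : Fin n, if j < i ∧ σ i ≤ σ j then 1 else 0 : ℕ)
      = (∑ i : Fin n, ∑ j : Fin n, if i < j ∧ σ j < σ i then 1 else 0 : ℕ) := by
    rw [Finset.sum_comm]
    refine Finset.sum_congr rfl fun j _ => Finset.sum_congr rfl fun i _ => ?_
    refine if_congr (and_congr_right fun hij => ?_) rfl rfl
    constructor
    · intro hle
      exact lt_of_le_of_ne hle fun he => absurd (σ.injective he) (ne_of_gt hij)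
    · exact le_of_lt
  rw [h4]
  have h5 : invCount σ = ((∑ i : Fin n, ∑ j : Fin n,
      if i < j ∧ σ j < σ i then 1 else 0 : ℕ) : ZMod 2) := by
    rw [invCount]
    push_cast
    rfl
  rw [h5, zsign_natCast]

end AuxSigns

section AuxCombinatorics

lemma count_lt {n : ℕ} (t : ℕ) (ht : t ≤ n) :
    (∑ j : Fin n, if (j : ℕ) < t then (1 : ZMod 2) else 0) = (t : ZMod 2) := by
  rw [Fin.sum_univ_eq_sum_range (fun m => if m < t then (1 : ZMod 2) else 0)]
  rw [← Finset.sum_filter]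
  have : (Finset.range n).filter (· < t) = Finset.range t := by
    ext m; simp only [Finset.mem_filter, Finset.mem_range]; omega
  rw [this, Finset.sum_const, Finset.card_range, nsmul_eq_mul, mul_one]

lemma pair_parity {n : ℕ} (σ : Equiv.Perm (Fin n)) (k : Fin n) :
    (∑ j : Fin n, ((if j < k ∧ σ k < σ j then (1 : ZMod 2) else 0)
      + (if k < j ∧ σ j < σ k then 1 else 0)))
    = ((k : ℕ) : ZMod 2) + ((σ k : ℕ) : ZMod 2) := by
  have step : ∀ j : Fin n, ((if j < k ∧ σ k < σ j then (1 : ZMod 2) else 0)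
      + (if k < j ∧ σ j < σ k then 1 else 0))
      = (if (j : ℕ) < (k : ℕ) then (1 : ZMod 2) else 0)
        + (if ((σ j : ℕ)) < ((σ k : ℕ)) then 1 else 0) := by
    intro j
    by_cases hjk : j = k
    · subst hjk; simp
    · have h1 : σ j ≠ σ k := fun h => hjk (σ.injective h)
      have hv : (j : ℕ) ≠ (k : ℕ) := fun h => hjk (Fin.ext h)
      have hs : ((σ j : ℕ)) ≠ ((σ k : ℕ)) := fun h => h1 (Fin.ext h)
      simp only [Fin.lt_iff_val_lt_val]
      split_ifs <;> first | rfl | (exfalso; omega)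
  rw [Finset.sum_congr rfl fun j _ => step j, Finset.sum_add_distrib,
    count_lt (k : ℕ) k.isLt.le]
  congr 1
  have := Equiv.sum_comp σ (fun v : Fin n => if (v : ℕ) < ((σ k : ℕ)) then (1 : ZMod 2) else 0)
  rw [this, count_lt _ (σ k).isLt.le]

lemma cross_sum {n : ℕ} (σ : Equiv.Perm (Fin n)) (a : Fin n → ZMod 2) :
    (∑ i : Fin n, ∑ j : Fin n, if i < j ∧ σ j < σ i then a i + a j else 0)
    = ∑ k : Fin n, a k * (((k : ℕ) : ZMod 2) + ((σ k : ℕ) : ZMod 2)) := by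
  have split : ∀ (i j : Fin n), (if i < j ∧ σ j < σ i then a i + a j else 0)
      = (a i * if i < j ∧ σ j < σ i then 1 else 0)
        + (a j * if i < j ∧ σ j < σ i then 1 else 0) := by
    intro i j; split <;> ring
  simp_rw [split, Finset.sum_add_distrib, ← Finset.mul_sum]
  rw [Finset.sum_comm (f := fun i j => a j * if i < j ∧ σ j < σ i then (1 : ZMod 2) else 0)]
  simp_rw [← Finset.mul_sum]
  rw [← Finset.sum_add_distrib]
  refine Finset.sum_congr rfl fun k _ => ?_
  rw [← mul_add, ← pair_parity σ k, Finset.sum_add_distrib]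
  ring

lemma sum_block_lt {n rn : ℕ} (hr : rn ≤ n) (g : Fin n → ZMod 2) :
    (∑ i : Fin rn, g ⟨(i : ℕ), lt_of_lt_of_le i.isLt hr⟩)
      = ∑ k : Fin n, if (k : ℕ) < rn then g k else 0 := by
  have hG : ∀ (m : ℕ) (h : m < n),
      g ⟨m, h⟩ = if h' : m < n then g ⟨m, h'⟩ else 0 := by
    intro m h
    rw [dif_pos h]
  set G : ℕ → ZMod 2 := fun m => if h' : m < n then g ⟨m, h'⟩ else 0 with hGdef
  calc (∑ i : Fin rn, g ⟨(i : ℕ), lt_of_lt_of_le i.isLt hr⟩)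
      = ∑ i : Fin rn, G (i : ℕ) := Finset.sum_congr rfl fun i _ => hG _ _
    _ = ∑ m ∈ Finset.range rn, G m := Fin.sum_univ_eq_sum_range G rn
    _ = ∑ m ∈ (Finset.range n).filter (· < rn), G m := by
        congr 1; ext m; simp only [Finset.mem_filter, Finset.mem_range]; omega
    _ = ∑ m ∈ Finset.range n, if m < rn then G m else 0 := by
        rw [Finset.sum_filter]
    _ = ∑ k : Fin n, if (k : ℕ) < rn then G (k : ℕ) else 0 :=
        (Fin.sum_univ_eq_sum_range (fun m => if m < rn then G m else 0) n).symm
    _ = ∑ k : Fin n, if (k : ℕ) < rn then g k else 0 := by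
        refine Finset.sum_congr rfl fun k _ => ?_
        rw [hGdef]; simp [k.isLt]

lemma sum_block_ge {n rn : ℕ} (hr : rn ≤ n) (g : Fin n → ZMod 2) :
    (∑ j : Fin (n - rn), g ⟨rn + (j : ℕ), by omega⟩)
      = ∑ k : Fin n, if rn ≤ (k : ℕ) then g k else 0 := by
  set G : ℕ → ZMod 2 := fun m => if h' : m < n then g ⟨m, h'⟩ else 0 with hGdef
  have hG : ∀ (m : ℕ) (h : m < n), g ⟨m, h⟩ = G m := by
    intro m h; rw [hGdef]; simp [h]
  calc (∑ j : Fin (n - rn), g ⟨rn + (j : ℕ), by omega⟩)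
      = ∑ j : Fin (n - rn), G (rn + (j : ℕ)) := Finset.sum_congr rfl fun j _ => hG _ _
    _ = ∑ m ∈ Finset.range (n - rn), G (rn + m) :=
        Fin.sum_univ_eq_sum_range (fun m => G (rn + m)) (n - rn)
    _ = ∑ m ∈ Finset.Ico rn n, G m := by
        rw [Finset.sum_Ico_eq_sum_range]
    _ = ∑ m ∈ (Finset.range n).filter (rn ≤ ·), G m := by
        congr 1; ext m; simp only [Finset.mem_filter, Finset.mem_range, Finset.mem_Ico]; omega
    _ = ∑ m ∈ Finset.range n, if rn ≤ m then G m else 0 := by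
        rw [Finset.sum_filter]
    _ = ∑ k : Fin n, if rn ≤ (k : ℕ) then G (k : ℕ) else 0 :=
        (Fin.sum_univ_eq_sum_range (fun m => if rn ≤ m then G m else 0) n).symm
    _ = ∑ k : Fin n, if rn ≤ (k : ℕ) then g k else 0 := by
        refine Finset.sum_congr rfl fun k _ => ?_
        rw [hG _ k.isLt]

lemma core_identity (n : ℕ) (p : Fin n → ZMod 2) (σ : Equiv.Perm (Fin n))
    (rn : ℕ) (hr : rn ≤ n) :
    (∑ i : Fin n, ∑ j : Fin n,
        if i < j ∧ σ j < σ i then (p (σ i) + 1) * (p (σ j) + 1) else 0)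
    + ((∑ i : Fin rn, p (σ ⟨(i : ℕ), lt_of_lt_of_le i.isLt hr⟩)
          * ((rn : ZMod 2) - 1 - ((i : ℕ) : ZMod 2)))
    + ((((∑ i : Fin rn, p (σ ⟨(i : ℕ), lt_of_lt_of_le i.isLt hr⟩)) + (rn : ZMod 2))
          * ((((n - rn) + 1 : ℕ) : ZMod 2) - 1 - ((0 : ℕ) : ZMod 2)))
    + ∑ j : Fin (n - rn), p (σ ⟨rn + (j : ℕ), by omega⟩)
          * ((((n - rn) + 1 : ℕ) : ZMod 2) - 1 - (((j : ℕ) + 1 : ℕ) : ZMod 2))))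
    = (∑ m : Fin n, p m * ((n : ZMod 2) - 1 - ((m : ℕ) : ZMod 2)))
      + (((rn * (n - rn) : ℕ) : ZMod 2) + (invCount σ
      + (∑ i : Fin n, ∑ j : Fin n,
          if i < j ∧ σ j < σ i then p (σ i) * p (σ j) else 0))) := by
  have hsplit : ∀ i j : Fin n,
      (if i < j ∧ σ j < σ i then (p (σ i) + 1) * (p (σ j) + 1) else 0)
      = (if i < j ∧ σ j < σ i then p (σ i) * p (σ j) else 0)
        + ((if i < j ∧ σ j < σ i then p (σ i) + p (σ j) else 0)
        + (if i < j ∧ σ j < σ i then (1 : ZMod 2) else 0)) := by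
    intro i j; split <;> ring
  simp_rw [hsplit, Finset.sum_add_distrib]
  rw [cross_sum σ (fun k => p (σ k))]
  have hA : (∑ i : Fin rn, p (σ ⟨(i : ℕ), lt_of_lt_of_le i.isLt hr⟩))
      = ∑ k : Fin n, if (k : ℕ) < rn then p (σ k) else 0 :=
    sum_block_lt hr (fun k => p (σ k))
  have hSy : (∑ i : Fin rn, p (σ ⟨(i : ℕ), lt_of_lt_of_le i.isLt hr⟩)
        * ((rn : ZMod 2) - 1 - ((i : ℕ) : ZMod 2)))
      = ∑ k : Fin n, if (k : ℕ) < rn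
          then p (σ k) * ((rn : ZMod 2) - 1 - ((k : ℕ) : ZMod 2)) else 0 :=
    sum_block_lt hr (fun k => p (σ k) * ((rn : ZMod 2) - 1 - ((k : ℕ) : ZMod 2)))
  have hTail : (∑ j : Fin (n - rn), p (σ ⟨rn + (j : ℕ), by omega⟩)
        * ((((n - rn) + 1 : ℕ) : ZMod 2) - 1 - (((j : ℕ) + 1 : ℕ) : ZMod 2)))
      = ∑ k : Fin n, if rn ≤ (k : ℕ)
          then p (σ k) * ((((n - rn) + 1 : ℕ) : ZMod 2) - 1
            - (((((k : ℕ) - rn) + 1 : ℕ)) : ZMod 2)) else 0 := by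
    rw [← sum_block_ge hr (fun k => p (σ k) * ((((n - rn) + 1 : ℕ) : ZMod 2) - 1
      - (((((k : ℕ) - rn) + 1 : ℕ)) : ZMod 2)))]
    refine Finset.sum_congr rfl fun j _ => ?_
    have h1 : ((rn + (j : ℕ)) - rn) = (j : ℕ) := by omega
    simp only [h1]
  rw [hSy, hTail, hA]
  have hC0 : ((((n - rn) + 1 : ℕ)) : ZMod 2) - 1 - ((0 : ℕ) : ZMod 2)
      = (((n - rn) : ℕ) : ZMod 2) := by push_cast; ring
  rw [hC0, add_mul, Finset.sum_mul]
  simp_rw [ite_mul, zero_mul]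
  rw [← Equiv.sum_comp σ (fun m => p m * ((n : ZMod 2) - 1 - ((m : ℕ) : ZMod 2)))]
  have key : (∑ k : Fin n, p (σ k) * (((k : ℕ) : ZMod 2) + ((σ k : ℕ) : ZMod 2)))
      + ((∑ k : Fin n, if (k : ℕ) < rn
            then p (σ k) * ((rn : ZMod 2) - 1 - ((k : ℕ) : ZMod 2)) else 0)
      + ((∑ k : Fin n, if (k : ℕ) < rn
            then p (σ k) * (((n - rn : ℕ)) : ZMod 2) else 0)
      + (∑ k : Fin n, if rn ≤ (k : ℕ)
            then p (σ k) * ((((n - rn) + 1 : ℕ) : ZMod 2) - 1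
              - (((((k : ℕ) - rn) + 1 : ℕ)) : ZMod 2)) else 0)))
      = ∑ k : Fin n, p (σ k) * ((n : ZMod 2) - 1 - ((σ k : ℕ) : ZMod 2)) := by
    rw [← Finset.sum_add_distrib, ← Finset.sum_add_distrib, ← Finset.sum_add_distrib]
    refine Finset.sum_congr rfl fun k _ => ?_
    have hns : ((rn : ℕ) : ZMod 2) + (((n - rn : ℕ)) : ZMod 2) = (n : ZMod 2) := by
      rw [← Nat.cast_add]; congr 1; omega
    by_cases hk : (k : ℕ) < rn
    · rw [if_pos hk, if_pos hk, if_neg (by omega)]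
      rw [← hns]
      generalize p (σ k) = a
      generalize ((k : ℕ) : ZMod 2) = K
      generalize (((σ k : Fin n) : ℕ) : ZMod 2) = S
      generalize ((rn : ℕ) : ZMod 2) = Rn
      generalize (((n - rn : ℕ)) : ZMod 2) = Sn
      revert a K S Rn Sn; decide
    · rw [if_neg hk, if_neg hk, if_pos (by omega)]
      have hk' : rn ≤ (k : ℕ) := by omega
      have hsub : ((((k : ℕ) - rn) + 1 : ℕ) : ZMod 2)
          = ((k : ℕ) : ZMod 2) - ((rn : ℕ) : ZMod 2) + 1 := by
        push_cast [Nat.cast_sub hk']; ring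
      have hsn1 : ((((n - rn) + 1 : ℕ)) : ZMod 2) = (((n - rn : ℕ)) : ZMod 2) + 1 := by
        push_cast; ring
      rw [hsub, hsn1, ← hns]
      generalize p (σ k) = a
      generalize ((k : ℕ) : ZMod 2) = K
      generalize (((σ k : Fin n) : ℕ) : ZMod 2) = S
      generalize ((rn : ℕ) : ZMod 2) = Rn
      generalize (((n - rn : ℕ)) : ZMod 2) = Sn
      revert a K S Rn Sn; decide
  rw [Nat.cast_mul, invCount]
  linear_combination key

end AuxCombinatorics

section AuxModules

variable (R : Type*) [CommRing R] (L0 L1 : Type*)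
  [AddCommGroup L0] [AddCommGroup L1] [Module R L0] [Module R L1]

/-- sign twist on the odd component -/
def twistMap (k : ℕ) : (L0 × L1) →ₗ[R] (L0 × L1) where
  toFun z := (z.1, ((-1 : ℤ) ^ k) • z.2)
  map_add' z w := by simp [Prod.ext_iff, smul_add]
  map_smul' r z := by
    refine Prod.ext rfl ?_
    show ((-1 : ℤ) ^ k) • (r • z.2) = r • (((-1 : ℤ) ^ k) • z.2)
    rw [smul_comm]

lemma twistMap_homog (k : ℕ) (p : ZMod 2) (z : L0 × L1) (hz : IsHomog p z) :
    twistMap R L0 L1 k z = zsign (p * (k : ZMod 2)) • z := by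
  have hp : p = 0 ∨ p = 1 := by
    have : ∀ a : ZMod 2, a = 0 ∨ a = 1 := by decide
    exact this p
  rcases hp with hp | hp
  · subst hp
    simp only [IsHomog, eq_self_iff_true, if_true] at hz
    have : zsign (0 * (k : ZMod 2)) = 1 := by rw [zero_mul]; rfl
    rw [this, one_smul]
    show (z.1, ((-1 : ℤ) ^ k) • z.2) = z
    rw [hz, smul_zero]
    exact Prod.ext rfl hz.symm
  · subst hp
    simp only [IsHomog, if_neg one_ne_zero] at hz
    rw [one_mul, zsign_natCast]
    show (z.1, ((-1 : ℤ) ^ k) • z.2) = ((-1 : ℤ) ^ k) • z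
    rw [Prod.smul_def, hz, smul_zero]

variable (b : ∀ n : ℕ, MultilinearMap R (fun _ : Fin n => L0 × L1) (L0 × L1))

/-- the induced brackets on the parity reversion -/
def piBracket (n : ℕ) : MultilinearMap R (fun _ : Fin n => L1 × L0) (L1 × L0) :=
  (LinearEquiv.prodComm R L0 L1).toLinearMap.compMultilinearMap
    ((b n).compLinearMap (fun i =>
      (twistMap R L0 L1 (n - 1 - (i : ℕ))).comp (LinearEquiv.prodComm R L1 L0).toLinearMap))

lemma piBracket_apply (n : ℕ) (v : Fin n → L1 × L0) :
    piBracket R L0 L1 b n v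
      = (LinearEquiv.prodComm R L0 L1)
          (b n (fun i => twistMap R L0 L1 (n - 1 - (i : ℕ))
            ((LinearEquiv.prodComm R L1 L0) (v i)))) := rfl

lemma piBracket_homog (n : ℕ) (x : Fin n → L0 × L1) (p : Fin n → ZMod 2)
    (hx : ∀ i, IsHomog (p i) (x i)) :
    piBracket R L0 L1 b n (fun i => (LinearEquiv.prodComm R L0 L1) (x i))
      = shiftSign p • (LinearEquiv.prodComm R L0 L1) (b n x) := by
  rw [piBracket_apply]
  have hswap : ∀ i, (LinearEquiv.prodComm R L1 L0) ((LinearEquiv.prodComm R L0 L1) (x i))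
      = x i := by intro i; simp
  have harg : ∀ i : Fin n, twistMap R L0 L1 (n - 1 - (i : ℕ))
        ((LinearEquiv.prodComm R L1 L0) ((LinearEquiv.prodComm R L0 L1) (x i)))
      = zsign (p i * ((n - 1 - (i : ℕ) : ℕ) : ZMod 2)) • x i := by
    intro i
    rw [hswap i, twistMap_homog R L0 L1 _ (p i) (x i) (hx i)]
  have hmap : b n (fun i => twistMap R L0 L1 (n - 1 - (i : ℕ))
        ((LinearEquiv.prodComm R L1 L0) ((LinearEquiv.prodComm R L0 L1) (x i))))
      = (∏ i : Fin n, zsign (p i * ((n - 1 - (i : ℕ) : ℕ) : ZMod 2))) • b n x := by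
    calc b n (fun i => twistMap R L0 L1 (n - 1 - (i : ℕ))
          ((LinearEquiv.prodComm R L1 L0) ((LinearEquiv.prodComm R L0 L1) (x i))))
        = ((b n).restrictScalars ℤ) (fun i =>
            zsign (p i * ((n - 1 - (i : ℕ) : ℕ) : ZMod 2)) • x i) := by
          rw [MultilinearMap.coe_restrictScalars]
          exact congrArg _ (funext harg)
      _ = (∏ i : Fin n, zsign (p i * ((n - 1 - (i : ℕ) : ℕ) : ZMod 2)))
            • ((b n).restrictScalars ℤ) x := MultilinearMap.map_smul_univ _ _ _
      _ = _ := by rw [MultilinearMap.coe_restrictScalars]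
  rw [hmap, map_zsmul, shiftSign_eq_zsign, zsign_sum]
  congr 1
  refine Finset.prod_congr rfl fun i _ => ?_
  congr 2
  have h1 : (1 : ℕ) ≤ n := i.pos
  have h2 : (i : ℕ) ≤ n - 1 := by have := i.isLt; omega
  rw [Nat.cast_sub h2, Nat.cast_sub h1, Nat.cast_one]

lemma map_cons_zsmul {M N : Type*} [AddCommGroup M] [AddCommGroup N]
    [Module R M] [Module R N] {m : ℕ}
    (f : MultilinearMap R (fun _ : Fin (m + 1) => M) N) (c : ℤ) (w : M) (t : Fin m → M) :
    f (Fin.cons (c • w) t) = c • f (Fin.cons w t) := by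
  have h1 : (Fin.cons (c • w) t : Fin (m + 1) → M)
      = Function.update (Fin.cons w t) 0 (c • w) := (Fin.update_cons_zero _ _ _).symm
  have h2 : (Fin.cons w t : Fin (m + 1) → M)
      = Function.update (Fin.cons w t) 0 w := (Fin.update_cons_zero _ _ _).symm
  rw [h1]
  rw [show f (Function.update (Fin.cons w t) 0 (c • w))
      = (f.restrictScalars ℤ) (Function.update (Fin.cons w t) 0 (c • w)) from rfl]
  rw [(f.restrictScalars ℤ).map_update_smul]
  rw [MultilinearMap.coe_restrictScalars, ← h2]

lemma term_eq (hpar : ∀ (n : ℕ) (x : Fin n → L0 × L1) (p : Fin n → ZMod 2),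
      (∀ i, IsHomog (p i) (x i)) →
      IsHomog ((∑ i, p i) + (n : ZMod 2)) (b n x))
    (n : ℕ) (x : Fin n → L0 × L1) (p : Fin n → ZMod 2)
    (hx : ∀ i, IsHomog (p i) (x i)) (r : Fin (n + 1)) (σ : Equiv.Perm (Fin n)) :
    koszulSign σ (fun i => p i + 1) • jacobiTerm (piBracket R L0 L1 b) r σ
        (fun i => (LinearEquiv.prodComm R L0 L1) (x i))
      = (LinearEquiv.prodComm R L0 L1)
          ((shiftSign p * ((-1 : ℤ) ^ ((r : ℕ) * (n - (r : ℕ)))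
            * (Equiv.Perm.sign σ : ℤ) * koszulSign σ p)) • jacobiTerm b r σ x) := by
  set rn := (r : ℕ) with hrn
  set y : Fin rn → L0 × L1 :=
    fun i => x (σ ⟨(i : ℕ), lt_of_lt_of_le i.isLt r.is_le⟩) with hy
  set py : Fin rn → ZMod 2 :=
    fun i => p (σ ⟨(i : ℕ), lt_of_lt_of_le i.isLt r.is_le⟩) with hpy
  set z : Fin ((n - rn) + 1) → L0 × L1 :=
    Fin.cons (b rn y) (fun j => x (σ ⟨rn + (j : ℕ), by omega⟩)) with hz
  set pz : Fin ((n - rn) + 1) → ZMod 2 :=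
    Fin.cons ((∑ i, py i) + (rn : ZMod 2)) (fun j => p (σ ⟨rn + (j : ℕ), by omega⟩)) with hpz
  have hzhom : ∀ t, IsHomog (pz t) (z t) := by
    refine Fin.cases ?_ ?_
    · simpa [hz, hpz] using hpar rn y py (fun i => hx _)
    · intro j; simpa [hz, hpz] using hx _
  have step1 : jacobiTerm (piBracket R L0 L1 b) r σ
        (fun i => (LinearEquiv.prodComm R L0 L1) (x i))
      = piBracket R L0 L1 b ((n - rn) + 1)
          (Fin.cons (piBracket R L0 L1 b rn (fun i => (LinearEquiv.prodComm R L0 L1) (y i)))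
            (fun j => (LinearEquiv.prodComm R L0 L1) (x (σ ⟨rn + (j : ℕ), by omega⟩)))) := rfl
  have step2 : piBracket R L0 L1 b rn (fun i => (LinearEquiv.prodComm R L0 L1) (y i))
      = shiftSign py • (LinearEquiv.prodComm R L0 L1) (b rn y) :=
    piBracket_homog R L0 L1 b rn y py (fun i => hx _)
  have hcons : (Fin.cons ((LinearEquiv.prodComm R L0 L1) (b rn y))
        (fun j => (LinearEquiv.prodComm R L0 L1) (x (σ ⟨rn + (j : ℕ), by omega⟩)))
        : Fin ((n - rn) + 1) → L1 × L0)
      = fun t => (LinearEquiv.prodComm R L0 L1) (z t) := by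
    funext t
    refine Fin.cases ?_ (fun j => ?_) t <;> simp [hz]
  have step3 : piBracket R L0 L1 b ((n - rn) + 1) (fun t => (LinearEquiv.prodComm R L0 L1) (z t))
      = shiftSign pz • (LinearEquiv.prodComm R L0 L1) (b ((n - rn) + 1) z) :=
    piBracket_homog R L0 L1 b _ z pz hzhom
  have step4 : b ((n - rn) + 1) z = jacobiTerm b r σ x := rfl
  rw [step1, step2, map_cons_zsmul, hcons, step3, step4, smul_smul, smul_smul, map_zsmul]
  congr 1
  have e2 : shiftSign py = zsign (∑ i : Fin rn,
      p (σ ⟨(i : ℕ), lt_of_lt_of_le i.isLt r.is_le⟩)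
        * ((rn : ZMod 2) - 1 - ((i : ℕ) : ZMod 2))) := shiftSign_eq_zsign py
  have e3 : shiftSign pz = zsign (
      (((∑ i : Fin rn, p (σ ⟨(i : ℕ), lt_of_lt_of_le i.isLt r.is_le⟩)) + (rn : ZMod 2))
          * ((((n - rn) + 1 : ℕ) : ZMod 2) - 1 - ((0 : ℕ) : ZMod 2)))
      + ∑ j : Fin (n - rn), p (σ ⟨rn + (j : ℕ), by omega⟩)
          * ((((n - rn) + 1 : ℕ) : ZMod 2) - 1 - (((j : ℕ) + 1 : ℕ) : ZMod 2))) := by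
    rw [shiftSign_eq_zsign]
    congr 1
    rw [Fin.sum_univ_succ]
    simp only [hpz, Fin.cons_zero, Fin.cons_succ, Fin.val_zero, Fin.val_succ]
    try push_cast
    try ring
  have e4 : ((Equiv.Perm.sign σ : ℤˣ) : ℤ) = zsign (invCount σ) := sign_eq_zsign_invCount σ
  have e5 : (-1 : ℤ) ^ (rn * (n - rn)) = zsign (((rn * (n - rn) : ℕ)) : ZMod 2) :=
    (zsign_natCast _).symm
  have e1 : koszulSign σ (fun i => p i + 1) = zsign (∑ i : Fin n, ∑ j : Fin n,
      if i < j ∧ σ j < σ i then (p (σ i) + 1) * (p (σ j) + 1) else 0) := rfl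
  have e6 : koszulSign σ p = zsign (∑ i : Fin n, ∑ j : Fin n,
      if i < j ∧ σ j < σ i then p (σ i) * p (σ j) else 0) := rfl
  have e0 : shiftSign p = zsign (∑ m : Fin n,
      p m * ((n : ZMod 2) - 1 - ((m : ℕ) : ZMod 2))) := shiftSign_eq_zsign p
  rw [e0, e1, e2, e3, e4, e5, e6]
  have hm : ∀ a c : ZMod 2, zsign a * zsign c = zsign (a + c) := by decide
  rw [hm, hm, hm, hm, hm]
  exact congrArg zsign (by
    have h := core_identity n p σ rn r.is_le
    linear_combination h)

end AuxModules

theorem parity_reversion_sends_higher_Jacobi_to_odd_higher_Jacobi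
    (R : Type*) [CommRing R] (L0 L1 : Type*)
    [AddCommGroup L0] [AddCommGroup L1] [Module R L0] [Module R L1]
    -- the n-ary brackets on L = L0 × L1, multilinear over R
    (b : ∀ n : ℕ, MultilinearMap R (fun _ : Fin n => L0 × L1) (L0 × L1))
    -- the n-ary bracket has parity n mod 2
    (hpar : ∀ (n : ℕ) (x : Fin n → L0 × L1) (p : Fin n → ZMod 2),
      (∀ i, IsHomog (p i) (x i)) →
      IsHomog ((∑ i, p i) + (n : ZMod 2)) (b n x))
    -- the brackets are antisymmetric in the supersense
    (hanti : ∀ (n : ℕ) (x : Fin n → L0 × L1) (p : Fin n → ZMod 2)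
      (σ : Equiv.Perm (Fin n)), (∀ i, IsHomog (p i) (x i)) →
      b n (fun i => x (σ i)) =
        ((Equiv.Perm.sign σ : ℤ) * koszulSign σ p) • b n x)
    -- the brackets satisfy the higher Jacobi identities
    (hjac : ∀ (n : ℕ) (x : Fin n → L0 × L1) (p : Fin n → ZMod 2),
      (∀ i, IsHomog (p i) (x i)) →
      ∑ r : Fin (n + 1), ∑ σ : Equiv.Perm (Fin n),
        (if IsShuffle (r : ℕ) σ then
          ((-1 : ℤ) ^ ((r : ℕ) * (n - (r : ℕ))) * (Equiv.Perm.sign σ : ℤ) *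
            koszulSign σ p) • jacobiTerm b r σ x
        else 0) = 0) :
    -- then the induced brackets on ΠL = L1 × L0 ...
    ∃ bPi : ∀ n : ℕ, MultilinearMap R (fun _ : Fin n => L1 × L0) (L1 × L0),
      -- ... defined by Π[x₁,…,xₙ] = (−1)^{x̃₁(n−1)+⋯+x̃_{n−1}}[Πx₁,…,Πxₙ] ...
      (∀ (n : ℕ) (x : Fin n → L0 × L1) (p : Fin n → ZMod 2),
        (∀ i, IsHomog (p i) (x i)) →
        LinearEquiv.prodComm R L0 L1 (b n x) =
          shiftSign p • bPi n (fun i => LinearEquiv.prodComm R L0 L1 (x i))) ∧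
      -- ... satisfy the odd higher Jacobi identities.
      (∀ (n : ℕ) (u : Fin n → L1 × L0) (q : Fin n → ZMod 2),
        (∀ i, IsHomog (q i) (u i)) →
        ∑ r : Fin (n + 1), ∑ σ : Equiv.Perm (Fin n),
          (if IsShuffle (r : ℕ) σ then
            koszulSign σ q • jacobiTerm bPi r σ u
          else 0) = 0) := by
  refine ⟨piBracket R L0 L1 b, ?_, ?_⟩
  · intro n x p hx
    rw [piBracket_homog R L0 L1 b n x p hx, smul_smul]
    have h1 : shiftSign p * shiftSign p = 1 := by
      rw [shiftSign_eq_zsign]; exact zsign_mul_self _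
    rw [h1, one_smul]
  · intro n u q hu
    set x : Fin n → L0 × L1 := fun i => (LinearEquiv.prodComm R L1 L0) (u i) with hxdef
    set p : Fin n → ZMod 2 := fun i => q i + 1 with hp
    have hcases : ∀ a : ZMod 2, a = 0 ∨ a = 1 := by decide
    have hx : ∀ i, IsHomog (p i) (x i) := by
      intro i
      have hui := hu i
      rcases hcases (q i) with h | h
      · have h2 : (u i).2 = 0 := by simpa [IsHomog, h] using hui
        have hpi : p i = 1 := by rw [hp]; simp [h]
        simp only [IsHomog, hpi, if_neg one_ne_zero]
        simpa [hxdef] using h2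
      · have h2 : (u i).1 = 0 := by simpa [IsHomog, h] using hui
        have hpi : p i = 0 := by rw [hp]; simp [h]; decide
        simp only [IsHomog, hpi, if_pos rfl]
        simpa [hxdef] using h2
    have hu' : u = fun i => (LinearEquiv.prodComm R L0 L1) (x i) := by
      funext i; simp [hxdef]
    have hq : q = fun i => p i + 1 := by
      funext i
      rw [hp]
      have : ∀ a : ZMod 2, a = a + 1 + 1 := by decide
      exact this (q i)
    rw [hq, hu']
    calc (∑ r : Fin (n + 1), ∑ σ : Equiv.Perm (Fin n),
          if IsShuffle (r : ℕ) σ then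
            koszulSign σ (fun i => p i + 1) • jacobiTerm (piBracket R L0 L1 b) r σ
              (fun i => (LinearEquiv.prodComm R L0 L1) (x i))
          else 0)
        = ∑ r : Fin (n + 1), ∑ σ : Equiv.Perm (Fin n),
            (LinearEquiv.prodComm R L0 L1)
              (if IsShuffle (r : ℕ) σ then
                shiftSign p • (((-1 : ℤ) ^ ((r : ℕ) * (n - (r : ℕ)))
                  * (Equiv.Perm.sign σ : ℤ) * koszulSign σ p) • jacobiTerm b r σ x)
              else 0) := by
          refine Finset.sum_congr rfl fun r _ => Finset.sum_congr rfl fun σ _ => ?_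
          by_cases hsh : IsShuffle (r : ℕ) σ
          · rw [if_pos hsh, if_pos hsh,
              term_eq R L0 L1 b hpar n x p hx r σ, smul_smul, ← mul_assoc, ← mul_assoc]
          · rw [if_neg hsh, if_neg hsh, map_zero]
      _ = (LinearEquiv.prodComm R L0 L1)
            (∑ r : Fin (n + 1), ∑ σ : Equiv.Perm (Fin n),
              if IsShuffle (r : ℕ) σ then
                shiftSign p • (((-1 : ℤ) ^ ((r : ℕ) * (n - (r : ℕ)))
                  * (Equiv.Perm.sign σ : ℤ) * koszulSign σ p) • jacobiTerm b r σ x)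
              else 0) := by
          rw [map_sum]
          refine Finset.sum_congr rfl fun r _ => ?_
          rw [map_sum]
      _ = (LinearEquiv.prodComm R L0 L1)
            (shiftSign p • ∑ r : Fin (n + 1), ∑ σ : Equiv.Perm (Fin n),
              if IsShuffle (r : ℕ) σ then
                (((-1 : ℤ) ^ ((r : ℕ) * (n - (r : ℕ)))
                  * (Equiv.Perm.sign σ : ℤ) * koszulSign σ p) • jacobiTerm b r σ x)
              else 0) := by
          congr 1
          rw [Finset.smul_sum]
          refine Finset.sum_congr rfl fun r _ => ?_
          rw [Finset.smul_sum]
          refine Finset.sum_congr rfl fun σ _ => ?_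
          rw [smul_ite, smul_zero]
      _ = 0 := by
          rw [hjac n x p hx, smul_zero, map_zero]
end

section
/- Fix s ∈ Z, weights w₁,…,w_N ∈ Z on variables x₁,…,x_N and weights v₁,…,v_M ∈ Z on variables y₁,…,y_M. Let g ∈ R[y₁,…,y_M] be weighted homogeneous of weight s, let φ_i ∈ R[x₁,…,x_N] be weighted homogeneous of weight v_i for each i, and for l ≥ 0 and indices i₁,…,i_l ∈ {1,…,M} let T ∈ R[x₁,…,x_N] be weighted homogeneous of weight v_{i₁}+⋯+v_{i_l} − (l−1)s. Then the polynomial T · Π_{j=1}^{l} (∂g/∂y_{i_j})(φ₁,…,φ_M) is weighted homogeneous of weight s with respect to w₁,…,w_N. Consequently, every term S^{i₁…i_l}(x) · ∂_{i_l}g(φ(x)) ⋯ ∂_{i₁}g(φ(x)) of the pullback expansion f(x) = S⁰(x) + g(φ(x)) + ½ S^{ij}(x) ∂_j g(φ(x)) ∂_i g(φ(x)) + … by an s-shifted thick morphism is weighted homogeneous of weight s whenever g has weight s. -/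
open MvPolynomial

namespace MvPolynomial

variable {σ : Type*} {R : Type*} [CommRing R]

private lemma isWH_pow {w : σ → ℤ} {p : MvPolynomial σ R} {m : ℤ}
    (hp : IsWeightedHomogeneous w p m) (n : ℕ) :
    IsWeightedHomogeneous w (p ^ n) (n • m) := by
  induction n with
  | zero => simpa using isWeightedHomogeneous_one R w
  | succ k ih =>
      rw [pow_succ, succ_nsmul]
      exact ih.mul hp

private lemma isWH_aeval {N M : ℕ} {w : Fin N → ℤ} {v : Fin M → ℤ}
    {p : MvPolynomial (Fin M) R} {n : ℤ}
    (hp : IsWeightedHomogeneous v p n)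
    (φ : Fin M → MvPolynomial (Fin N) R)
    (hφ : ∀ i, IsWeightedHomogeneous w (φ i) (v i)) :
    IsWeightedHomogeneous w (aeval φ p) n := by
  conv_lhs => rw [p.as_sum]
  rw [map_sum]
  apply IsWeightedHomogeneous.sum
  intro d hd
  rw [aeval_monomial]
  have h1 : IsWeightedHomogeneous w
      ((algebraMap R (MvPolynomial (Fin N) R)) (coeff d p)) 0 :=
    isWeightedHomogeneous_C w _
  have h2 : IsWeightedHomogeneous w (d.prod fun i k => φ i ^ k)
      (∑ i ∈ d.support, (d i) • v i) := by
    refine IsWeightedHomogeneous.prod d.support _ (fun i => (d i) • v i) ?_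
    exact fun i _ => isWH_pow (hφ i) (d i)
  have hw : (∑ i ∈ d.support, (d i) • v i) = n := by
    rw [← hp (mem_support_iff.mp hd), Finsupp.weight_apply, Finsupp.sum]
  have := h1.mul h2
  rwa [zero_add, hw] at this

private lemma isWH_pderiv {M : ℕ} {v : Fin M → ℤ}
    {g : MvPolynomial (Fin M) R} {s : ℤ}
    (hg : IsWeightedHomogeneous v g s) (i : Fin M) :
    IsWeightedHomogeneous v (pderiv i g) (s - v i) := by
  conv_lhs => rw [g.as_sum]
  rw [map_sum]
  apply IsWeightedHomogeneous.sum
  intro d hd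
  rw [pderiv_monomial]
  by_cases hdi : d i = 0
  · rw [hdi]
    simpa using isWeightedHomogeneous_zero R v (s - v i)
  · apply isWeightedHomogeneous_monomial
    have hsplit : (d - Finsupp.single i 1) + Finsupp.single i 1 = d := by
      ext j
      by_cases hj : j = i
      · subst hj
        simp [Nat.sub_add_cancel (Nat.one_le_iff_ne_zero.mpr hdi)]
      · simp [Finsupp.single_apply, Ne.symm hj, hj]
    have hd' : Finsupp.weight v d = s := hg (mem_support_iff.mp hd)
    have : Finsupp.weight v (d - Finsupp.single i 1) + Finsupp.weight v (Finsupp.single i 1) = s := by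
      rw [← map_add, hsplit, hd']
    have hvs : Finsupp.weight v (Finsupp.single i 1) = v i := by
      rw [Finsupp.weight_apply, Finsupp.sum_single_index] <;> simp
    omega

end MvPolynomial

theorem pullback_expansion_term_isWeightedHomogeneous
    (R : Type*) [CommRing R] (N M : ℕ) (s : ℤ)
    (w : Fin N → ℤ) (v : Fin M → ℤ)
    (g : MvPolynomial (Fin M) R)
    (hg : IsWeightedHomogeneous v g s)
    (φ : Fin M → MvPolynomial (Fin N) R)
    (hφ : ∀ i, IsWeightedHomogeneous w (φ i) (v i))
    (l : ℕ) (idx : Fin l → Fin M)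
    (T : MvPolynomial (Fin N) R)
    (hT : IsWeightedHomogeneous w T ((∑ j, v (idx j)) - ((l : ℤ) - 1) * s)) :
    IsWeightedHomogeneous w
      (T * ∏ j : Fin l, aeval φ (pderiv (idx j) g)) s := by
  have hprod : IsWeightedHomogeneous w (∏ j : Fin l, aeval φ (pderiv (idx j) g))
      (∑ j : Fin l, (s - v (idx j))) := by
    refine IsWeightedHomogeneous.prod Finset.univ _ _ (fun j _ => ?_)
    exact MvPolynomial.isWH_aeval (MvPolynomial.isWH_pderiv hg (idx j)) φ hφ
  have := hT.mul hprod
  have heq : ((∑ j, v (idx j)) - ((l : ℤ) - 1) * s) + (∑ j : Fin l, (s - v (idx j))) = s := by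
    rw [Finset.sum_sub_distrib, Finset.sum_const, Finset.card_univ, Fintype.card_fin]
    ring
  rwa [heq] at this
end
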